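/- Let m ≥ 1, t ∈ ℝ, ξ ∈ 𝕊^{2m+1}, and let φ(z) = |cosh t + sinh t (z·ξ̄)|² on 𝕊^{2m+1}. Then for every z ∈ 𝕊^{2m+1}: φ(z)^{−1} |∂φ|²(z) = (1/2) sinh²t (1 − |z·ξ̄|²), where |∂φ|²(z) = (1/8)|P_{H_z}(∇φ̃(z))|² is the squared norm of ∂_bφ with respect to the canonical pseudohermitian structure θ_c. -/

import Mathlib

noncomputable section

/-- The hermitian pairing `z·ξ̄ = Σ_j z_j conj(ξ_j)` on `ℂ^{m+1}`
(note Mathlib's `inner` is conjugate-linear in the first slot). -/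
def hprod {m : ℕ} (z ξ : EuclideanSpace ℂ (Fin (m+1))) : ℂ := inner ℂ ξ z

/-- The degree-zero homogeneous extension of a function on the unit sphere
`𝕊^{2m+1} ⊂ ℂ^{m+1}`: `F̃(y) = F(y/‖y‖)`. -/
def sphExtC {m : ℕ} (F : EuclideanSpace ℂ (Fin (m+1)) → ℝ)
    (y : EuclideanSpace ℂ (Fin (m+1))) : ℝ :=
  F (‖y‖⁻¹ • y)

/-- Second directional derivative of `F` at `x` in direction `v`. -/
def dir2 {V : Type*} [NormedAddCommGroup V] [NormedSpace ℝ V]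
    (F : V → ℝ) (x v : V) : ℝ :=
  fderiv ℝ (fun y => fderiv ℝ F y v) x v

/-- The Euclidean Laplacian on `ℂ^{m+1} ≅ ℝ^{2m+2}`, computed in the real orthonormal
basis `{e_j, i·e_j}`. -/
def lapC {m : ℕ} (F : EuclideanSpace ℂ (Fin (m+1)) → ℝ)
    (z : EuclideanSpace ℂ (Fin (m+1))) : ℝ :=
  ∑ j : Fin (m+1),
    (dir2 F z (EuclideanSpace.single j 1) + dir2 F z (EuclideanSpace.single j Complex.I))

/-- The Reeb derivative `TF(z) = d/ds|_{s=0} F(e^{is/2} z)` for the canonical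
pseudohermitian structure on `𝕊^{2m+1}`. -/
def reeb {m : ℕ} (F : EuclideanSpace ℂ (Fin (m+1)) → ℝ)
    (z : EuclideanSpace ℂ (Fin (m+1))) : ℝ :=
  deriv (fun s : ℝ => F (Complex.exp (Complex.I * s / 2) • z)) 0

/-- The CR sub-Laplacian of `(𝕊^{2m+1}, θ_c)`:
`Δ_b F(z) = (1/4) Δ_{ℝ^{2m+2}} F̃(z) − T(TF)(z)`. -/
def subLapC {m : ℕ} (F : EuclideanSpace ℂ (Fin (m+1)) → ℝ)
    (z : EuclideanSpace ℂ (Fin (m+1))) : ℝ :=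
  (1 / 4) * lapC (sphExtC F) z - reeb (reeb (sphExtC F)) z

/-- Orthogonal projection onto the holomorphic tangent (horizontal) space
`H_z = {w : Σ_j w_j conj(z_j) = 0}` at a point `z` of the unit sphere. -/
def projH {m : ℕ} (z w : EuclideanSpace ℂ (Fin (m+1))) : EuclideanSpace ℂ (Fin (m+1)) :=
  w - (inner ℂ z w : ℂ) • z

/-- `|∂F|²(z) = (1/8)|P_{H_z}(∇F̃(z))|²`, the squared norm of `∂_b F` with respect to the
canonical pseudohermitian structure `θ_c`. -/
def delbSq {m : ℕ} (F : EuclideanSpace ℂ (Fin (m+1)) → ℝ)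
    (z : EuclideanSpace ℂ (Fin (m+1))) : ℝ :=
  (1 / 8) * ‖projH z (gradient (sphExtC F) z)‖ ^ 2

section Aux

lemma real_inner_E' {m : ℕ} (x y : EuclideanSpace ℂ (Fin (m+1))) :
    (inner ℝ x y : ℝ) = (inner ℂ x y : ℂ).re := by
  simp [PiLp.inner_apply, RCLike.inner_apply, Complex.re_sum]

lemma hasFDerivAt_sphRetr' {F : Type*} [NormedAddCommGroup F] [InnerProductSpace ℝ F]
    (z : F) (hz : ‖z‖ = 1) :
    HasFDerivAt (fun y : F => ‖y‖⁻¹ • y)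
      (ContinuousLinearMap.id ℝ F - (innerSL ℝ z).smulRight z) z := by
  have h1 : HasFDerivAt (fun y : F => ‖y‖ ^ 2) (2 • (innerSL ℝ) z) z :=
    (hasStrictFDerivAt_norm_sq z).hasFDerivAt
  have h2 : HasDerivAt (fun s : ℝ => (Real.sqrt s)⁻¹) (-(1/2) : ℝ) ((fun y : F => ‖y‖ ^ 2) z) := by
    have h := (Real.hasDerivAt_sqrt (one_ne_zero)).inv (by simp)
    simp only [Real.sqrt_one] at h
    norm_num at h
    simp only [hz, one_pow]
    exact h
  have h3 := h2.comp_hasFDerivAt z h1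
  have h4 : ((fun s : ℝ => (Real.sqrt s)⁻¹) ∘ (fun y : F => ‖y‖ ^ 2)) = fun y : F => ‖y‖⁻¹ := by
    funext y; simp [Function.comp, Real.sqrt_sq (norm_nonneg y)]
  rw [h4] at h3
  have h5 := h3.smul (hasFDerivAt_id z)
  have h6 : (‖z‖⁻¹ • ContinuousLinearMap.id ℝ F
      + ((-(1/2) : ℝ) • (2 • (innerSL ℝ) z)).smulRight z)
      = ContinuousLinearMap.id ℝ F - (innerSL ℝ z).smulRight z := by
    ext u
    simp [hz]
    module
  simp only [id_eq] at h5
  rwa [h6] at h5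

end Aux

set_option maxHeartbeats 1000000

/-- for `m ≥ 1`, `t ∈ ℝ`, `ξ ∈ 𝕊^{2m+1}` and
`φ(z) = |cosh t + sinh t (z·ξ̄)|²`, one has, at every `z ∈ 𝕊^{2m+1}`,
`φ(z)⁻¹ |∂φ|²(z) = (1/2) sinh²t (1 − |z·ξ̄|²)`. -/

theorem stmt13 (m : ℕ) (hm : 1 ≤ m) (t : ℝ)
    (ξ : EuclideanSpace ℂ (Fin (m+1))) (hξ : ‖ξ‖ = 1)
    (φ : EuclideanSpace ℂ (Fin (m+1)) → ℝ)
    (hφ : ∀ z, φ z = ‖(Real.cosh t : ℂ) + (Real.sinh t : ℂ) * hprod z ξ‖ ^ 2) :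
    ∀ z : EuclideanSpace ℂ (Fin (m+1)), ‖z‖ = 1 →
      (φ z)⁻¹ * delbSq φ z
        = (1 / 2) * Real.sinh t ^ 2 * (1 - ‖hprod z ξ‖ ^ 2) := by
  intro z hz
  set a : ℝ := Real.cosh t with ha
  set b : ℝ := Real.sinh t with hb
  set w : ℂ := inner ℂ ξ z with hw
  set A : ℂ := (a:ℂ) + (b:ℂ) * w with hA
  set C : ℂ := 2 * ((b:ℂ) * A) with hC
  set r0 : ℝ := (C * (starRingEnd ℂ) w).re with hr0
  set v : EuclideanSpace ℂ (Fin (m+1)) := C • ξ - (r0:ℂ) • z with hv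
  set Bc : EuclideanSpace ℂ (Fin (m+1)) →L[ℝ] ℂ :=
    (b:ℂ) • ((innerSL ℂ ξ).restrictScalars ℝ) with hBc
  have hwprod : hprod z ξ = w := rfl
  have hφfun : φ = fun u : EuclideanSpace ℂ (Fin (m+1)) =>
      ‖(a:ℂ) + (b:ℂ) * (inner ℂ ξ u : ℂ)‖ ^ 2 := by
    funext u
    rw [hφ u]
    rfl
  have hAd : ∀ x : EuclideanSpace ℂ (Fin (m+1)),
      HasFDerivAt (fun u : EuclideanSpace ℂ (Fin (m+1)) =>
        (a:ℂ) + (b:ℂ) * (inner ℂ ξ u : ℂ)) Bc x :=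
    fun x => (Bc.hasFDerivAt (x := x)).const_add (a:ℂ)
  have hφd : HasFDerivAt φ (2 • (innerSL ℝ A).comp Bc) z := by
    rw [hφfun]
    exact (hAd z).norm_sq
  have hr := hasFDerivAt_sphRetr' z hz
  have hrz : (fun y : EuclideanSpace ℂ (Fin (m+1)) => ‖y‖⁻¹ • y) z = z := by
    show ‖z‖⁻¹ • z = z
    rw [hz]; simp
  have hcomp : HasFDerivAt (sphExtC φ)
      ((2 • (innerSL ℝ A).comp Bc).comp
        (ContinuousLinearMap.id ℝ (EuclideanSpace ℂ (Fin (m+1)))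
          - (innerSL ℝ z).smulRight z)) z := by
    have hφd' : HasFDerivAt φ (2 • (innerSL ℝ A).comp Bc)
        ((fun y : EuclideanSpace ℂ (Fin (m+1)) => ‖y‖⁻¹ • y) z) := by
      rw [hrz]; exact hφd
    exact HasFDerivAt.comp (g := φ) (f := fun y => ‖y‖⁻¹ • y) z hφd' hr
  have hKey : InnerProductSpace.toDual ℝ (EuclideanSpace ℂ (Fin (m+1))) v
      = (2 • (innerSL ℝ A).comp Bc).comp
        (ContinuousLinearMap.id ℝ (EuclideanSpace ℂ (Fin (m+1)))
          - (innerSL ℝ z).smulRight z) := by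
    ext u
    simp only [InnerProductSpace.toDual_apply_apply, ContinuousLinearMap.comp_apply,
      ContinuousLinearMap.smul_apply, ContinuousLinearMap.sub_apply,
      ContinuousLinearMap.id_apply, ContinuousLinearMap.smulRight_apply, innerSL_apply_apply]
    rw [real_inner_E', real_inner_E' z u]
    simp only [hBc, ContinuousLinearMap.smul_apply, ContinuousLinearMap.coe_restrictScalars',
      innerSL_apply_apply, smul_eq_mul, Complex.inner, nsmul_eq_mul, hv, inner_sub_left,
      inner_smul_left, Complex.conj_ofReal, hr0, hC, hA, map_sub, map_smul, map_mul, map_add,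
      map_ofNat, Complex.sub_re, inner_sub_right, inner_smul_right, inner_smul_real_right]
    simp only [Complex.mul_re, Complex.mul_im, Complex.add_re, Complex.add_im,
      Complex.sub_re, Complex.sub_im, Complex.ofReal_re, Complex.ofReal_im,
      Complex.conj_re, Complex.conj_im, Complex.re_ofNat, Complex.im_ofNat,
      Complex.smul_re, Complex.smul_im, smul_eq_mul]
    ring
  have hGrad : gradient (sphExtC φ) z = v :=
    (hasGradientAt_iff_hasFDerivAt.mpr (hKey ▸ hcomp)).gradient
  have hzz : (inner ℂ z z : ℂ) = 1 := by
    rw [inner_self_eq_norm_sq_to_K, hz]; norm_num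
  have hξξ : (inner ℂ ξ ξ : ℂ) = 1 := by
    rw [inner_self_eq_norm_sq_to_K, hξ]; norm_num
  have hzξ : (inner ℂ z ξ : ℂ) = (starRingEnd ℂ) w := by
    rw [hw, inner_conj_symm]
  have hinnerzv : (inner ℂ z v : ℂ) = C * (starRingEnd ℂ) w - (r0:ℂ) := by
    rw [hv, inner_sub_right, inner_smul_right, inner_smul_right, hzz, hzξ]
    ring
  have hproj : projH z (gradient (sphExtC φ) z) = C • ξ - (C * (starRingEnd ℂ) w) • z := by
    rw [hGrad]
    unfold projH
    rw [hinnerzv, hv]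
    module
  have hns : ‖C • ξ - (C * (starRingEnd ℂ) w) • z‖ ^ 2
      = Complex.normSq C * (1 - Complex.normSq w) := by
    rw [← inner_self_eq_norm_sq (𝕜 := ℂ)]
    simp only [inner_sub_left, inner_sub_right, inner_smul_left, inner_smul_right,
      hzz, hξξ, hzξ, ← hw, mul_one, Complex.normSq_apply, RCLike.re_to_complex,
      hC, hA, map_mul, map_add, map_ofNat, Complex.conj_ofReal]
    simp only [Complex.mul_re, Complex.mul_im, Complex.add_re, Complex.add_im,
      Complex.sub_re, Complex.sub_im, Complex.conj_re, Complex.conj_im,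
      Complex.ofReal_re, Complex.ofReal_im, Complex.re_ofNat, Complex.im_ofNat,
      Complex.one_re, Complex.one_im]
    ring
  have hw1 : ‖w‖ ≤ 1 := by
    have h := norm_inner_le_norm (𝕜 := ℂ) ξ z
    rw [hξ, hz, mul_one] at h
    rw [hw]
    exact h
  have hsc : |Real.sinh t| < Real.cosh t := by
    nlinarith [Real.cosh_sq t, Real.cosh_pos t, sq_abs (Real.sinh t), abs_nonneg (Real.sinh t)]
  have hA0 : A ≠ 0 := by
    intro h0
    have h1 : (a:ℂ) = -((b:ℂ) * w) := by
      rw [hA] at h0; linear_combination h0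
    have h2 : ‖(a:ℂ)‖ = ‖(b:ℂ) * w‖ := by rw [h1]; simp
    rw [Complex.norm_real, norm_mul, Complex.norm_real, Real.norm_eq_abs, Real.norm_eq_abs] at h2
    have hac : |a| = Real.cosh t := abs_of_pos (by rw [ha]; exact Real.cosh_pos t)
    rw [hac, hb] at h2
    nlinarith [norm_nonneg w, abs_nonneg (Real.sinh t), hsc, hw1,
      mul_nonneg (abs_nonneg (Real.sinh t)) (sub_nonneg.mpr hw1)]
  have hφz : φ z = Complex.normSq A := by
    rw [hφ z, Complex.sq_norm, hwprod, ← hA]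
  have hφpos : 0 < φ z := by rw [hφz]; exact Complex.normSq_pos.mpr hA0
  have hCsq : Complex.normSq C = 4 * b ^ 2 * Complex.normSq A := by
    rw [hC, map_mul, map_mul, Complex.normSq_ofReal]
    norm_num [Complex.normSq_apply]
    ring
  have habs : ‖hprod z ξ‖ ^ 2 = Complex.normSq w := by
    rw [hwprod, Complex.sq_norm]
  unfold delbSq
  rw [hproj, hns, hCsq, habs, ← hφz]
  field_simp
  ring
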